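/- arXiv:2106.04000 — 2 statements merged into one kernel-verified Lean document; each statement's English description precedes it below -/
import Mathlib

section
/- Let f : Λ → ℂ be discrete analytic. Then δx f is also discrete analytic, and Z(δx f)(z) = f(z) − f(0) for every z ∈ Λ. -/
open Complex Finset GaussianInt

noncomputable section

/-- The lattice point `i` in the Gaussian integers. -/
def ii : GaussianInt := ⟨0, 1⟩

/-- `f` is discrete analytic on the whole lattice `Λ = ℤ + iℤ`. -/
def DAnalytic (f : GaussianInt → ℂ) : Prop :=
  ∀ z : GaussianInt,
    (f (z + 1 + ii) - f z) / (1 + Complex.I) = (f (z + 1) - f (z + ii)) / (1 - Complex.I)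

/-- `f` is discrete analytic on the right half lattice `Λ₊ = {z : Re z ≥ 0}`. -/
def DAnalyticOn (f : GaussianInt → ℂ) : Prop :=
  ∀ z : GaussianInt, 0 ≤ z.re →
    (f (z + 1 + ii) - f z) / (1 + Complex.I) = (f (z + 1) - f (z + ii)) / (1 - Complex.I)

/-- `γ 0, γ 1, …, γ n` is a path in the lattice from `a` to `b`:
consecutive points are at distance `1`. -/
def IsPath (γ : ℕ → GaussianInt) (n : ℕ) (a b : GaussianInt) : Prop :=
  γ 0 = a ∧ γ n = b ∧ ∀ k < n, ‖(γ (k + 1) : ℂ) - (γ k : ℂ)‖ = 1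

/-- The discrete integral `∫_γ f δz` along the path `γ 0, …, γ n`. -/
def discInt (f : GaussianInt → ℂ) (γ : ℕ → GaussianInt) (n : ℕ) : ℂ :=
  ∑ k ∈ Finset.range n, ((f (γ k) + f (γ (k + 1))) / 2) * ((γ (k + 1) : ℂ) - (γ k : ℂ))

/-- The canonical lattice path from `0` to `z`: first along the real axis, then vertically. -/
def cpath (z : GaussianInt) (k : ℕ) : GaussianInt :=
  ⟨z.re.sign * ((min k z.re.natAbs : ℕ) : ℤ),
   z.im.sign * ((min k (z.re.natAbs + z.im.natAbs) - z.re.natAbs : ℕ) : ℤ)⟩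

/-- The length of the canonical path from `0` to `z`. -/
def cpathLen (z : GaussianInt) : ℕ := z.re.natAbs + z.im.natAbs

/-- The operator `Z`: `Zf(z) = (f(0) - f(z))/2 + ∫_0^z f δz`, the integral being taken
along the canonical path (for discrete analytic `f` the integral is path-independent). -/
def Zop (f : GaussianInt → ℂ) : GaussianInt → ℂ := fun z =>
  (f 0 - f z) / 2 + discInt f (cpath z) (cpathLen z)

/-- The basic discrete analytic polynomials `z⁽ⁿ⁾ = Zⁿ1`. -/
def zpoly (n : ℕ) : GaussianInt → ℂ := Zop^[n] (fun _ => 1)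

/-- `α₊ = (1+i)/2`. -/
def aPlus : ℂ := (1 + Complex.I) / 2
/-- `α₋ = (1-i)/2`. -/
def aMinus : ℂ := (1 - Complex.I) / 2

/-- The difference operator `δx`. -/
def dxOp (f : GaussianInt → ℂ) : GaussianInt → ℂ := fun z => f (z + 1) - f z
/-- The difference operator `δy`. -/
def dyOp (f : GaussianInt → ℂ) : GaussianInt → ℂ := fun z => f (z + ii) - f z

/-- `f` belongs to the Hardy space `H₂(Λ₊)` with coefficient sequence `c`:
`f(z) = Σ c(n) z⁽ⁿ⁾(z)` on `Λ₊` and `Σ |c(n)|² < ∞`. -/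
def MemH2 (f : GaussianInt → ℂ) (c : ℕ → ℂ) : Prop :=
  Summable (fun n => ‖c n‖ ^ 2) ∧
  ∀ z : GaussianInt, 0 ≤ z.re → HasSum (fun n => c n * zpoly n z) (f z)


lemma toComplex_ii : ((ii : GaussianInt) : ℂ) = Complex.I := by
  simp [ii, toComplex_def']

lemma one_add_I_ne : (1 : ℂ) + Complex.I ≠ 0 := by
  intro h; have := congrArg Complex.im h; simp at this

lemma one_sub_I_ne : (1 : ℂ) - Complex.I ≠ 0 := by
  intro h; have := congrArg Complex.im h; simp at this

lemma step_id (f : GaussianInt → ℂ) (hf : DAnalytic f) (w d : GaussianInt)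
    (hd : d = 1 ∨ d = -1 ∨ d = ii ∨ d = -ii) :
    f (w + d) - f w
      = ((dxOp f w + dxOp f (w + d)) / 2) * (d : ℂ) - (dxOp f (w + d) - dxOp f w) / 2 := by
  rcases hd with rfl | rfl | rfl | rfl
  · simp only [dxOp, toComplex_one]
    ring
  · have e1 : w + -1 + 1 = w := by ring
    simp only [dxOp, e1, toComplex_neg, toComplex_one]
    ring
  · have h := hf w
    rw [div_eq_div_iff one_add_I_ne one_sub_I_ne] at h
    have e1 : w + ii + 1 = w + 1 + ii := by ring
    simp only [dxOp, e1, toComplex_ii]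
    linear_combination (1/2 : ℂ) * h
  · have h := hf (w + -ii)
    rw [div_eq_div_iff one_add_I_ne one_sub_I_ne] at h
    have e1 : w + -ii + 1 + ii = w + 1 := by ring
    have e2 : w + -ii + ii = w := by ring
    rw [e1, e2] at h
    simp only [dxOp, toComplex_neg, toComplex_ii]
    linear_combination (-1/2 : ℂ) * h

lemma telescope (f : GaussianInt → ℂ) (hf : DAnalytic f) (γ : ℕ → GaussianInt) (n : ℕ)
    (hstep : ∀ k < n, γ (k + 1) - γ k = 1 ∨ γ (k + 1) - γ k = -1 ∨
      γ (k + 1) - γ k = ii ∨ γ (k + 1) - γ k = -ii) :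
    f (γ n) - f (γ 0)
      = discInt (dxOp f) γ n - (dxOp f (γ n) - dxOp f (γ 0)) / 2 := by
  induction n with
  | zero => simp [discInt]
  | succ n ih =>
    have ih' := ih (fun k hk => hstep k (Nat.lt_succ_of_lt hk))
    have hs := step_id f hf (γ n) (γ (n + 1) - γ n) (hstep n (Nat.lt_succ_self n))
    have e : γ n + (γ (n + 1) - γ n) = γ (n + 1) := by ring
    rw [e] at hs
    have ec : ((γ (n + 1) - γ n : GaussianInt) : ℂ) = (γ (n + 1) : ℂ) - (γ n : ℂ) :=
      toComplex_sub _ _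
    rw [ec] at hs
    rw [discInt, Finset.sum_range_succ, ← discInt]
    linear_combination ih' + hs

lemma cpath_zero (z : GaussianInt) : cpath z 0 = 0 := by
  simp [cpath, Zsqrtd.ext_iff]

lemma cpath_last (z : GaussianInt) : cpath z (cpathLen z) = z := by
  have h1 : min (cpathLen z) z.re.natAbs = z.re.natAbs := by
    simp [cpathLen]
  have h2 : min (cpathLen z) (z.re.natAbs + z.im.natAbs) = z.re.natAbs + z.im.natAbs := by
    simp [cpathLen]
  simp only [cpath, h1, h2, Nat.add_sub_cancel_left]
  exact Zsqrtd.ext (Int.sign_mul_natAbs z.re) (Int.sign_mul_natAbs z.im)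

lemma cpath_step (z : GaussianInt) (k : ℕ) (hk : k < cpathLen z) :
    cpath z (k + 1) - cpath z k = 1 ∨ cpath z (k + 1) - cpath z k = -1 ∨
      cpath z (k + 1) - cpath z k = ii ∨ cpath z (k + 1) - cpath z k = -ii := by
  set a := z.re.natAbs with ha
  set b := z.im.natAbs with hb
  simp only [cpathLen, ← ha, ← hb] at hk
  rcases lt_or_ge k a with h | h
  · have h1 : min (k + 1) a = k + 1 := by omega
    have h2 : min k a = k := by omega
    have h3 : min (k + 1) (a + b) - a = 0 := by omega
    have h4 : min k (a + b) - a = 0 := by omega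
    have hre : z.re ≠ 0 := by
      intro h0; rw [h0] at ha; simp at ha; omega
    rcases hre.lt_or_gt with hs | hs
    · right; left
      have hsg : z.re.sign = -1 := Int.sign_eq_neg_one_iff_neg.mpr hs
      simp only [cpath, ← ha, ← hb, h1, h2, h3, h4, hsg, Zsqrtd.ext_iff]
      constructor <;> simp
    · left
      have hsg : z.re.sign = 1 := Int.sign_eq_one_iff_pos.mpr hs
      simp only [cpath, ← ha, ← hb, h1, h2, h3, h4, hsg, Zsqrtd.ext_iff]
      constructor <;> simp
  · have h1 : min (k + 1) a = a := by omega
    have h2 : min k a = a := by omega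
    have h3 : min (k + 1) (a + b) - a = (min k (a + b) - a) + 1 := by omega
    have him : z.im ≠ 0 := by
      intro h0; rw [h0] at hb; simp at hb; omega
    rcases him.lt_or_gt with hs | hs
    · right; right; right
      have hsg : z.im.sign = -1 := Int.sign_eq_neg_one_iff_neg.mpr hs
      simp only [cpath, ← ha, ← hb, h1, h2, h3, hsg, Zsqrtd.ext_iff, ii]
      constructor <;> simp
    · right; right; left
      have hsg : z.im.sign = 1 := Int.sign_eq_one_iff_pos.mpr hs
      simp only [cpath, ← ha, ← hb, h1, h2, h3, hsg, Zsqrtd.ext_iff, ii]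
      constructor <;> simp

/-- For discrete analytic `f`, `δx f` is discrete analytic and
`Z(δx f)(z) = f(z) - f(0)` for every `z ∈ Λ`. -/
theorem stmt4 (f : GaussianInt → ℂ) (hf : DAnalytic f) :
    DAnalytic (dxOp f) ∧ ∀ z : GaussianInt, Zop (dxOp f) z = f z - f 0 := by
  constructor
  · intro z
    have h1 := hf z
    have h2 := hf (z + 1)
    have e1 : z + 1 + ii + 1 = z + 1 + 1 + ii := by ring
    have e2 : z + ii + 1 = z + 1 + ii := by ring
    simp only [dxOp, e1, e2]
    rw [div_eq_div_iff one_add_I_ne one_sub_I_ne] at h1 h2 ⊢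
    linear_combination h2 - h1
  · intro z
    have key := telescope f hf (cpath z) (cpathLen z) (cpath_step z)
    rw [cpath_zero, cpath_last] at key
    rw [Zop]
    linear_combination -key

end
end

section
/- For every z ∈ Λ₊ (i.e., z ∈ Λ with Re z ≥ 0), limsup_{n→∞} |z^{(n)}(z)|^{1/n} ≤ 1/√2; equivalently, for every r with 1/√2 < r, the sequence |z^{(n)}(z)|/rⁿ is bounded. -/
open Complex Finset GaussianInt

noncomputable section

lemma abs_helper (a : ℤ) (n : ℕ) (h : n ≤ a.natAbs) : (a.sign * (n : ℤ)).natAbs = n := by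
  rcases lt_trichotomy a 0 with h' | h' | h'
  · rw [Int.sign_eq_neg_one_of_neg h']; simp
  · subst h'; simp at h; simp [h]
  · rw [Int.sign_eq_one_of_pos h']; simp

lemma sign_helper (a : ℤ) (n : ℕ) (hn : n ≠ 0) : (a.sign * (n : ℤ)).sign = a.sign := by
  rcases lt_trichotomy a 0 with h' | h' | h'
  · rw [Int.sign_eq_neg_one_of_neg h']
    simp [Int.sign_natCast_of_ne_zero hn]
  · subst h'; simp
  · rw [Int.sign_eq_one_of_pos h']
    simp [Int.sign_natCast_of_ne_zero hn]

lemma cpath_re (z : GaussianInt) (j : ℕ) :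
    (cpath z j).re = z.re.sign * ((min j z.re.natAbs : ℕ) : ℤ) := rfl

lemma cpath_im (z : GaussianInt) (j : ℕ) :
    (cpath z j).im = z.im.sign * ((min j (cpathLen z) - z.re.natAbs : ℕ) : ℤ) := rfl

lemma cpath_re_natAbs (z : GaussianInt) (j : ℕ) :
    (cpath z j).re.natAbs = min j z.re.natAbs := by
  rw [cpath_re, abs_helper] ; omega

lemma cpath_im_natAbs (z : GaussianInt) (j : ℕ) :
    (cpath z j).im.natAbs = min j (cpathLen z) - z.re.natAbs := by
  rw [cpath_im, abs_helper] ; unfold cpathLen; omega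

lemma cpathLen_cpath (z : GaussianInt) (m : ℕ) :
    cpathLen (cpath z m) = min m (cpathLen z) := by
  unfold cpathLen
  rw [cpath_re_natAbs, cpath_im_natAbs]
  unfold cpathLen; omega

lemma cpath_cpath (z : GaussianInt) {m k : ℕ} (hk : k ≤ m) (hm : m ≤ cpathLen z) :
    cpath (cpath z m) k = cpath z k := by
  have hL : cpathLen z = z.re.natAbs + z.im.natAbs := rfl
  rw [Zsqrtd.ext_iff]
  rw [cpath_re z k, cpath_im z k]
  constructor
  · show (cpath z m).re.sign * ((min k (cpath z m).re.natAbs : ℕ) : ℤ) = _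
    rw [cpath_re_natAbs, cpath_re]
    rcases eq_or_ne (min m z.re.natAbs) 0 with h0 | h0
    · have e1 : min k (min m z.re.natAbs) = 0 := by omega
      have e2 : min k z.re.natAbs = 0 := by omega
      rw [e1, e2]; simp
    · rw [sign_helper _ _ (by omega : min m z.re.natAbs ≠ 0)]
      have : min k (min m z.re.natAbs) = min k z.re.natAbs := by omega
      rw [this]
  · show (cpath z m).im.sign * ((min k (cpathLen (cpath z m)) - (cpath z m).re.natAbs : ℕ) : ℤ) = _
    rw [cpathLen_cpath, cpath_re_natAbs, cpath_im]
    have e1 : min k (min m (cpathLen z)) = k := by omega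
    have e2 : min k (cpathLen z) = k := by omega
    rw [e1, e2]
    rcases le_or_gt m z.re.natAbs with hc | hc
    · have e3 : k - min m z.re.natAbs = 0 := by omega
      have e4 : k - z.re.natAbs = 0 := by omega
      rw [e3, e4]; simp
    · have e5 : min m (cpathLen z) - z.re.natAbs ≠ 0 := by omega
      rw [sign_helper _ _ e5]
      have : k - min m z.re.natAbs = k - z.re.natAbs := by omega
      rw [this]

lemma cpath_step_h (z : GaussianInt) (hz : 0 ≤ z.re) {k : ℕ} (hk : k < z.re.natAbs) :
    ((cpath z (k+1) : ℂ)) - ((cpath z k : ℂ)) = 1 := by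
  have hs : z.re.sign = 1 := Int.sign_eq_one_of_pos (by omega)
  have e1 : min (k+1) z.re.natAbs = k+1 := by omega
  have e2 : min k z.re.natAbs = k := by omega
  have e3 : min (k+1) (cpathLen z) - z.re.natAbs = 0 := by unfold cpathLen; omega
  have e4 : min k (cpathLen z) - z.re.natAbs = 0 := by unfold cpathLen; omega
  rw [toComplex_def, toComplex_def, cpath_re, cpath_im, cpath_re, cpath_im, e1, e2, e3, e4, hs]
  push_cast
  ring

lemma cpath_step_v (z : GaussianInt) {k : ℕ} (hk1 : z.re.natAbs ≤ k) (hk2 : k < cpathLen z) :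
    ((cpath z (k+1) : ℂ)) - ((cpath z k : ℂ)) = (z.im.sign : ℂ) * Complex.I := by
  have e1 : min (k+1) z.re.natAbs = z.re.natAbs := by omega
  have e2 : min k z.re.natAbs = z.re.natAbs := by omega
  have e3 : min (k+1) (cpathLen z) = k + 1 := by omega
  have e4 : min k (cpathLen z) = k := by omega
  have e5 : ((k + 1 - z.re.natAbs : ℕ) : ℤ) = ((k - z.re.natAbs : ℕ) : ℤ) + 1 := by omega
  rw [toComplex_def, toComplex_def, cpath_re, cpath_im, cpath_re, cpath_im, e1, e2, e3, e4, e5]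
  push_cast
  ring

lemma zop_step (f : GaussianInt → ℂ) (z : GaussianInt) {m : ℕ} (hm : m < cpathLen z) :
    Zop f (cpath z (m+1)) = Zop f (cpath z m)
      + (f (cpath z m) + f (cpath z (m+1))) / 2 * ((cpath z (m+1) : ℂ) - (cpath z m : ℂ))
      - (f (cpath z (m+1)) - f (cpath z m)) / 2 := by
  have key : ∀ j : ℕ, j ≤ cpathLen z →
      Zop f (cpath z j) = (f 0 - f (cpath z j)) / 2 + discInt f (cpath z) j := by
    intro j hj
    unfold Zop
    congr 1
    rw [cpathLen_cpath]
    have : min j (cpathLen z) = j := by omega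
    rw [this]
    unfold discInt
    apply Finset.sum_congr rfl
    intro k hk
    rw [Finset.mem_range] at hk
    rw [cpath_cpath z (by omega : k ≤ j) hj, cpath_cpath z (by omega : k+1 ≤ j) hj]
  rw [key (m+1) (by omega), key m (by omega)]
  unfold discInt
  rw [Finset.sum_range_succ]
  ring

lemma zpoly_succ (n : ℕ) : zpoly (n+1) = Zop (zpoly n) := by
  unfold zpoly
  rw [Function.iterate_succ_apply']

lemma zpoly_zero_eval (z : GaussianInt) : zpoly 0 z = 1 := rfl

lemma zpoly_at_zero (n : ℕ) : zpoly (n+1) 0 = 0 := by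
  rw [zpoly_succ]
  unfold Zop
  have h0 : cpathLen 0 = 0 := rfl
  rw [h0]
  unfold discInt
  simp

lemma abs_half_half (x : ℂ) (h1 : x.re = 1/2 ∨ x.re = -(1/2))
    (h2 : x.im = 1/2 ∨ x.im = -(1/2)) : ‖x‖ = (Real.sqrt 2)⁻¹ := by
  have hn : Complex.normSq x = 2⁻¹ := by
    rcases h1 with h | h <;> rcases h2 with h' | h' <;>
      · rw [Complex.normSq_apply, h, h']; norm_num
  rw [Complex.norm_def, hn, Real.sqrt_inv]

lemma abs_sI_add_one (s : ℤ) (hs : s = 1 ∨ s = -1) :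
    ‖((s:ℂ) * Complex.I + 1) / 2‖ = (Real.sqrt 2)⁻¹ := by
  apply abs_half_half <;> rcases hs with h | h <;> subst h <;>
    simp [Complex.div_re, Complex.div_im, Complex.normSq_apply] <;> norm_num

lemma abs_sI_sub_one (s : ℤ) (hs : s = 1 ∨ s = -1) :
    ‖((s:ℂ) * Complex.I - 1) / 2‖ = (Real.sqrt 2)⁻¹ := by
  apply abs_half_half <;> rcases hs with h | h <;> subst h <;>
    simp [Complex.div_re, Complex.div_im, Complex.normSq_apply] <;> norm_num

lemma key_bound (z : GaussianInt) (hz : 0 ≤ z.re) :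
    ∀ n m : ℕ, m ≤ cpathLen z →
      ‖zpoly n (cpath z m)‖ ≤ (2*n+2 : ℝ)^m * ((Real.sqrt 2)⁻¹)^n := by
  have hs2 : Real.sqrt 2 * Real.sqrt 2 = 2 := Real.mul_self_sqrt (by norm_num)
  have hs2nn : (0:ℝ) ≤ Real.sqrt 2 := Real.sqrt_nonneg 2
  have hs2le : Real.sqrt 2 ≤ 2 := by nlinarith
  have ht0 : (0:ℝ) < (Real.sqrt 2)⁻¹ := by positivity
  set t : ℝ := (Real.sqrt 2)⁻¹ with ht'
  have hst : Real.sqrt 2 * t = 1 := by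
    rw [ht']; field_simp
  intro n
  induction n with
  | zero =>
    intro m hm
    rw [zpoly_zero_eval, norm_one]
    have h1 : (1:ℝ) ≤ (2*(0:ℝ)+2)^m := by
      calc (1:ℝ) = 1^m := (one_pow m).symm
      _ ≤ (2*(0:ℝ)+2)^m := by apply pow_le_pow_left₀ <;> norm_num
    simpa using h1
  | succ n ih =>
    intro m
    induction m with
    | zero =>
      intro _
      rw [cpath_zero, zpoly_at_zero]
      simp only [norm_zero, pow_zero, one_mul]
      positivity
    | succ m ihm =>
      intro hm
      have hm' : m ≤ cpathLen z := by omega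
      have hmL : m < cpathLen z := by omega
      have hrec := zop_step (zpoly n) z hmL
      rw [← zpoly_succ] at hrec
      have hA := ihm hm'
      have hB := ih m hm'
      have hC := ih (m+1) hm
      set A := zpoly (n+1) (cpath z m)
      set B := zpoly n (cpath z m)
      set C := zpoly n (cpath z (m+1))
      have htn : t ^ n = Real.sqrt 2 * t ^ (n+1) := by
        rw [pow_succ, mul_comm (Real.sqrt 2) (t^n * t), mul_assoc, mul_comm t (Real.sqrt 2), hst,
          mul_one]
      have hcast : ((2:ℝ)*((n:ℕ)+1:ℕ)+2) = 2*(n:ℝ)+4 := by push_cast; ring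
      rw [hcast] at hA ⊢
      have hpow1 : ((2*n+2:ℝ))^m ≤ (2*n+4)^m := by
        apply pow_le_pow_left₀ (by positivity) (by norm_num)
      have hpow1' : ((2*n+2:ℝ))^(m+1) ≤ (2*n+4)^(m+1) := by
        apply pow_le_pow_left₀ (by positivity) (by norm_num)
      have hpownn : (0:ℝ) ≤ (2*n+4)^m := by positivity
      have hpownn2 : (0:ℝ) ≤ (2*n+2)^m := by positivity
      have htnn : (0:ℝ) < t^(n+1) := by positivity
      have hgoalcast : ((2*(n+1)+2 : ℕ):ℝ) = (2*n+4 : ℝ) := by push_cast; ring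
      rcases lt_or_ge m z.re.natAbs with hcase | hcase
      · -- horizontal step
        have hd := cpath_step_h z hz hcase
        rw [hd] at hrec
        have hval : zpoly (n+1) (cpath z (m+1)) = A + B := by rw [hrec]; ring
        rw [hval]
        calc ‖A + B‖ ≤ ‖A‖ + ‖B‖ := norm_add_le A B
        _ ≤ (2*n+4:ℝ)^m * t^(n+1) + (2*n+2:ℝ)^m * t^n := by
            apply add_le_add hA hB
        _ = ((2*n+4:ℝ)^m + Real.sqrt 2 * (2*n+2:ℝ)^m) * t^(n+1) := by
            rw [htn]; push_cast; ring
        _ ≤ (2*(n:ℝ)+4)^(m+1) * t^(n+1) := by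
            apply mul_le_mul_of_nonneg_right _ (le_of_lt htnn)
            push_cast
            rw [show ((2:ℝ)*n+4)^(m+1) = (2*n+4) * (2*n+4)^m by rw [pow_succ]; ring_nf]
            nlinarith
      · -- vertical step
        have him : z.im ≠ 0 := by
          intro h0
          have : cpathLen z = z.re.natAbs := by unfold cpathLen; rw [h0]; simp
          omega
        have hsgn : z.im.sign = 1 ∨ z.im.sign = -1 := by
          rcases Int.lt_or_lt_of_ne him with h' | h'
          · right; exact Int.sign_eq_neg_one_of_neg h'
          · left; exact Int.sign_eq_one_of_pos h'
        have hd := cpath_step_v z hcase hmL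
        rw [hd] at hrec
        have hval : zpoly (n+1) (cpath z (m+1))
            = A + B * (((z.im.sign:ℂ) * Complex.I + 1)/2) + C * (((z.im.sign:ℂ) * Complex.I - 1)/2) := by
          rw [hrec]; ring
        rw [hval]
        have habs1 := abs_sI_add_one z.im.sign hsgn
        have habs2 := abs_sI_sub_one z.im.sign hsgn
        calc ‖A + B * (((z.im.sign:ℂ) * Complex.I + 1)/2) + C * (((z.im.sign:ℂ) * Complex.I - 1)/2)‖
            ≤ ‖A‖ + ‖B‖ * t + ‖C‖ * t := by
              refine le_trans (norm_add_le _ _) ?_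
              refine add_le_add (le_trans (norm_add_le _ _) (add_le_add le_rfl ?_)) ?_
              · rw [norm_mul, habs1]
              · rw [norm_mul, habs2]
        _ ≤ (2*n+4:ℝ)^m * t^(n+1) + (2*n+2:ℝ)^m * t^n * t + (2*n+2:ℝ)^(m+1) * t^n * t := by
            apply add_le_add (add_le_add hA _) _
            · exact mul_le_mul_of_nonneg_right hB (le_of_lt ht0)
            · exact mul_le_mul_of_nonneg_right hC (le_of_lt ht0)
        _ = ((2*n+4:ℝ)^m + (2*n+2:ℝ)^m + (2*n+2:ℝ)^(m+1)) * t^(n+1) := by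
            rw [pow_succ]; push_cast; ring
        _ ≤ (2*(n:ℝ)+4)^(m+1) * t^(n+1) := by
            apply mul_le_mul_of_nonneg_right _ (le_of_lt htnn)
            push_cast
            rw [show ((2:ℝ)*n+4)^(m+1) = (2*n+4) * (2*n+4)^m by rw [pow_succ]; ring_nf]
            rw [show ((2:ℝ)*n+2)^(m+1) = (2*n+2) * (2*n+2)^m by rw [pow_succ]; ring_nf]
            nlinarith


/-- For `z ∈ Λ₊`, `limsup |z⁽ⁿ⁾(z)|^{1/n} ≤ 1/√2`; equivalently, for every
`r > 1/√2` the sequence `|z⁽ⁿ⁾(z)|/rⁿ` is bounded. -/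
theorem stmt9 (z : GaussianInt) (hz : 0 ≤ z.re) (r : ℝ) (hr : 1 / Real.sqrt 2 < r) :
    ∃ C : ℝ, ∀ n : ℕ, ‖zpoly n z‖ / r ^ n ≤ C := by
  have hs2 : (0:ℝ) < Real.sqrt 2 := Real.sqrt_pos.mpr (by norm_num)
  have hr0 : 0 < r := lt_trans (by positivity) hr
  set t : ℝ := (Real.sqrt 2)⁻¹ with ht'
  have ht0 : 0 < t := by positivity
  set q : ℝ := t / r with hq'
  have hq0 : 0 < q := by positivity
  have hq1 : q < 1 := by
    rw [hq', div_lt_one hr0, ht', ← one_div]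
    exact hr
  set L : ℕ := cpathLen z with hL'
  -- the sequence u n = (2n+2)^L * q^n tends to 0, hence is bounded above
  have hv : Filter.Tendsto (fun n : ℕ => (n:ℝ)^L * q^n) Filter.atTop (nhds 0) :=
    tendsto_pow_const_mul_const_pow_of_abs_lt_one L (by rw [abs_of_pos hq0]; exact hq1)
  have hv1 : Filter.Tendsto (fun n : ℕ => ((n+1:ℕ):ℝ)^L * q^(n+1)) Filter.atTop (nhds 0) :=
    hv.comp (Filter.tendsto_add_atTop_nat 1)
  have hu : Filter.Tendsto (fun n : ℕ => (2*(n:ℝ)+2)^L * q^n) Filter.atTop (nhds 0) := by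
    have := hv1.const_mul ((2:ℝ)^L * q⁻¹)
    rw [mul_zero] at this
    convert this using 2 with n
    push_cast
    rw [show ((2:ℝ)*n+2)^L = 2^L * (n+1)^L by rw [← mul_pow]; ring_nf]
    rw [pow_succ]
    field_simp
  obtain ⟨C, hC⟩ := hu.bddAbove_range
  refine ⟨C, fun n => ?_⟩
  have hkey := key_bound z hz n L le_rfl
  rw [cpath_last] at hkey
  have h1 : ‖zpoly n z‖ / r^n ≤ (2*(n:ℝ)+2)^L * t^n / r^n := by
    apply div_le_div_of_nonneg_right hkey (by positivity) |>.trans_eq rfl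
  have h2 : (2*(n:ℝ)+2)^L * t^n / r^n = (2*(n:ℝ)+2)^L * q^n := by
    rw [hq', div_pow, mul_div_assoc]
  calc ‖zpoly n z‖ / r^n ≤ (2*(n:ℝ)+2)^L * t^n / r^n := h1
  _ = (2*(n:ℝ)+2)^L * q^n := h2
  _ ≤ C := hC ⟨n, rfl⟩

end
end
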